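/- arXiv:2605.22713 — 3 statements merged into one kernel-verified Lean document; each statement's English description precedes it below -/
import Mathlib

section
/- Let M ⊆ B(H) be a von Neumann algebra, let R be a contraction in M_d ⊗ M, let T be a contraction whose blocks T i j lie in the commutant M', and let ψ ∈ H be a unit vector. Then the following are equivalent: (i) ⟨(R i 0)(T j 0) ψ, ψ⟩ = (if i = j then α i else 0) for all i, j ∈ Fin d; (ii) (R i 0)(T j 0) ψ = (if i = j then α i else 0) • ψ for all i, j ∈ Fin d. (Condition (ii) is the componentwise form of the defining embezzlement equation (R ⊗ I_d)(I_d ⊗ T)(e₀ ⊗ ψ ⊗ e₀) = f(φ ⊗ ψ).) -/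
open scoped InnerProductSpace
open ContinuousLinearMap

/-- The block operator on `ℓ²(Fin d; H)` associated with a `d × d` matrix of operators on `H`,
acting by `(R x) i = ∑ j, (R i j) (x j)`. -/
noncomputable def blockOp {H : Type*} [NormedAddCommGroup H] [InnerProductSpace ℂ H] {d : ℕ}
    (R : Fin d → Fin d → H →L[ℂ] H) :
    (PiLp 2 fun _ : Fin d => H) →L[ℂ] (PiLp 2 fun _ : Fin d => H) :=
  (((PiLp.continuousLinearEquiv 2 ℂ (fun _ : Fin d => H)).symm :
      (∀ _ : Fin d, H) →L[ℂ] (PiLp 2 fun _ : Fin d => H))) ∘L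
    (ContinuousLinearMap.pi fun i => ∑ j, (R i j) ∘L (ContinuousLinearMap.proj j)) ∘L
    (((PiLp.continuousLinearEquiv 2 ℂ (fun _ : Fin d => H)) :
      (PiLp 2 fun _ : Fin d => H) →L[ℂ] (∀ _ : Fin d, H)))

variable {H : Type*} [NormedAddCommGroup H] [InnerProductSpace ℂ H] [CompleteSpace H]

/-- `R` is a contraction in `M_d ⊗ M`: all blocks lie in `M` and the block operator on
`ℓ²(Fin d; H)` has operator norm at most `1`. -/
def IsContractionIn (M : VonNeumannAlgebra H) {d : ℕ}
    (R : Fin d → Fin d → H →L[ℂ] H) : Prop :=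
  (∀ i j, R i j ∈ M) ∧ ‖blockOp R‖ ≤ 1

/-- A bipartite exact embezzlement protocol for `α` in `(M, M', H)`: `R` is a contraction in
`M_d ⊗ M`, `T` is a contraction with blocks in the commutant `M'`, `ψ` is a unit vector, and
`(R i 0)(T j 0) ψ = δ_{ij} α i • ψ` for all `i, j`. -/
def BipartiteProtocol (M : VonNeumannAlgebra H) {d : ℕ} [NeZero d] (α : Fin d → ℝ)
    (R T : Fin d → Fin d → H →L[ℂ] H) (ψ : H) : Prop :=
  IsContractionIn M R ∧ IsContractionIn M.commutant T ∧ ‖ψ‖ = 1 ∧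
    ∀ i j, (R i 0) ((T j 0) ψ) = (if i = j then (α i : ℂ) else 0) • ψ

/-- A monopartite exact embezzlement protocol for `α` in `(M, H)`: `R` is a contraction in
`M_d ⊗ M`, `ψ` is a unit vector, and `⟨(R i 0)* X (R j 0) ψ, ψ⟩ = δ_{ij} (α i)² ⟨X ψ, ψ⟩`
for all `X ∈ M` and all `i, j`. -/
def MonopartiteProtocol (M : VonNeumannAlgebra H) {d : ℕ} [NeZero d] (α : Fin d → ℝ)
    (R : Fin d → Fin d → H →L[ℂ] H) (ψ : H) : Prop :=
  IsContractionIn M R ∧ ‖ψ‖ = 1 ∧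
    ∀ X ∈ M, ∀ i j : Fin d,
      ⟪(adjoint (R i 0)) (X ((R j 0) ψ)), ψ⟫_ℂ
        = (if i = j then ((α i : ℂ)) ^ 2 else 0) * ⟪X ψ, ψ⟫_ℂ

/-- The orthogonal projection of `H` onto the closure of `{Y ψ : Y ∈ S}`, as an operator
on `H`. -/
noncomputable def suppProjOn (S : Set (H →L[ℂ] H)) (ψ : H) : H →L[ℂ] H :=
  letI K := (Submodule.span ℂ ((fun Y : H →L[ℂ] H => Y ψ) '' S)).topologicalClosure
  K.subtypeL ∘L (Submodule.orthogonalProjectionOnto K : H →L[ℂ] K)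

/-- The support projection of the state `⟨· ψ, ψ⟩` on `M`: the orthogonal projection onto
the closure of `M' ψ`. -/
noncomputable def suppP (M : VonNeumannAlgebra H) (ψ : H) : H →L[ℂ] H :=
  suppProjOn (M.commutant : Set (H →L[ℂ] H)) ψ

/-- The support projection of the state `⟨· ψ, ψ⟩` on `M'`: the orthogonal projection onto
the closure of `M ψ`. -/
noncomputable def suppP' (M : VonNeumannAlgebra H) (ψ : H) : H →L[ℂ] H :=
  suppProjOn (M : Set (H →L[ℂ] H)) ψ

lemma blockOp_apply {H : Type*} [NormedAddCommGroup H] [InnerProductSpace ℂ H] {d : ℕ}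
    (R : Fin d → Fin d → H →L[ℂ] H) (x : PiLp 2 fun _ : Fin d => H) (i : Fin d) :
    blockOp R x i = ∑ j, R i j (x j) := by
  have h : blockOp R x i
      = (∑ j, (R i j) ∘L ContinuousLinearMap.proj j) ((WithLp.equiv 2 _) x) := rfl
  rw [h, ContinuousLinearMap.sum_apply]
  rfl

lemma col_bound {H : Type*} [NormedAddCommGroup H] [InnerProductSpace ℂ H] {d : ℕ} [NeZero d]
    (R : Fin d → Fin d → H →L[ℂ] H) (hR : ‖blockOp R‖ ≤ 1) (η : H) :
    ∑ i, ‖R i 0 η‖ ^ 2 ≤ ‖η‖ ^ 2 := by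
  set y : ∀ _ : Fin d, H := Pi.single 0 η with hy
  set x : PiLp 2 (fun _ : Fin d => H) :=
    (PiLp.continuousLinearEquiv 2 ℂ (fun _ : Fin d => H)).symm y with hx
  have hxj : ∀ j, x j = y j := fun j => rfl
  have hnx : ‖x‖ ^ 2 = ‖η‖ ^ 2 := by
    rw [PiLp.norm_sq_eq_of_L2]
    rw [Finset.sum_eq_single (0 : Fin d)]
    · simp [hxj, hy]
    · intro b _ hb; simp [hxj, hy, Pi.single_eq_of_ne hb]
    · simp
  have happ : ∀ i, blockOp R x i = R i 0 η := by
    intro i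
    rw [blockOp_apply]
    rw [Finset.sum_eq_single (0 : Fin d)]
    · simp [hxj, hy]
    · intro b _ hb; simp [hxj, hy, Pi.single_eq_of_ne hb]
    · simp
  have h1 : ‖blockOp R x‖ ≤ ‖x‖ := by
    calc ‖blockOp R x‖ ≤ ‖blockOp R‖ * ‖x‖ := le_opNorm _ _
    _ ≤ 1 * ‖x‖ := by gcongr
    _ = ‖x‖ := one_mul _
  have h2 : ‖blockOp R x‖ ^ 2 ≤ ‖x‖ ^ 2 := pow_le_pow_left₀ (norm_nonneg _) h1 2
  calc ∑ i, ‖R i 0 η‖ ^ 2 = ∑ i, ‖blockOp R x i‖ ^ 2 := by simp [happ]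
    _ = ‖blockOp R x‖ ^ 2 := (PiLp.norm_sq_eq_of_L2 _ _).symm
    _ ≤ ‖x‖ ^ 2 := h2
    _ = ‖η‖ ^ 2 := hnx

/-- For contractions `R` in `M_d ⊗ M` and `T` with blocks in `M'`, and a unit vector `ψ`,
the inner-product condition `⟨(R i 0)(T j 0) ψ, ψ⟩ = δ_{ij} α i` is equivalent to the
vector condition `(R i 0)(T j 0) ψ = δ_{ij} α i • ψ`. -/
theorem bipartite_inner_iff_vector
    {H : Type*} [NormedAddCommGroup H] [InnerProductSpace ℂ H] [CompleteSpace H]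
    (M : VonNeumannAlgebra H) {d : ℕ} [NeZero d] (hd : 2 ≤ d)
    (α : Fin d → ℝ) (hα : ∀ i, 0 < α i) (hsum : ∑ i, (α i) ^ 2 = 1)
    (R T : Fin d → Fin d → H →L[ℂ] H)
    (hR : IsContractionIn M R) (hT : IsContractionIn M.commutant T)
    (ψ : H) (hψ : ‖ψ‖ = 1) :
    (∀ i j, ⟪(R i 0) ((T j 0) ψ), ψ⟫_ℂ = if i = j then (α i : ℂ) else 0) ↔
      (∀ i j, (R i 0) ((T j 0) ψ) = (if i = j then (α i : ℂ) else 0) • ψ) := by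
  constructor
  · intro hin
    set v : Fin d → Fin d → H := fun i j => R i 0 (T j 0 ψ) with hv
    set a : Fin d → Fin d → ℂ := fun i j => ⟪ψ, v i j⟫_ℂ with ha
    have hψψ : ⟪ψ, ψ⟫_ℂ = 1 := by
      rw [inner_self_eq_norm_sq_to_K, hψ]; norm_num
    have haval : ∀ i j, a i j = if i = j then (α i : ℂ) else 0 := by
      intro i j
      have := hin i j
      have h2 : a i j = starRingEnd ℂ ⟪v i j, ψ⟫_ℂ := (inner_conj_symm _ _).symm
      rw [h2, this]
      split <;> simp
    -- Pythagoras
    have hw : ∀ i j, ⟪ψ, v i j - a i j • ψ⟫_ℂ = 0 := by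
      intro i j
      rw [inner_sub_right, inner_smul_right, hψψ]
      simp [ha]
    have key : ∀ i j, ‖v i j‖ ^ 2 = ‖a i j‖ ^ 2 + ‖v i j - a i j • ψ‖ ^ 2 := by
      intro i j
      have hdec : v i j = a i j • ψ + (v i j - a i j • ψ) := by abel
      have horth : ⟪a i j • ψ, v i j - a i j • ψ⟫_ℂ = 0 := by
        rw [inner_smul_left, hw]; ring
      calc ‖v i j‖ ^ 2 = ‖a i j • ψ + (v i j - a i j • ψ)‖ ^ 2 := by rw [← hdec]
        _ = ‖a i j • ψ‖ ^ 2 + ‖v i j - a i j • ψ‖ ^ 2 := by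
            rw [norm_add_sq (𝕜 := ℂ), horth]; simp
        _ = ‖a i j‖ ^ 2 + ‖v i j - a i j • ψ‖ ^ 2 := by
            rw [norm_smul, hψ]; ring
    -- sums
    have hsumT : ∑ j, ‖T j 0 ψ‖ ^ 2 ≤ 1 := by
      have := col_bound T hT.2 ψ; rwa [hψ, one_pow] at this
    have hsumv : ∑ j, ∑ i, ‖v i j‖ ^ 2 ≤ 1 := by
      refine le_trans (Finset.sum_le_sum fun j _ => col_bound R hR.2 (T j 0 ψ)) hsumT
    have hsuma : ∑ j, ∑ i, ‖a i j‖ ^ 2 = 1 := by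
      rw [← hsum]
      rw [Finset.sum_comm]
      refine Finset.sum_congr rfl fun i _ => ?_
      rw [Finset.sum_eq_single i]
      · simp [haval, abs_of_pos (hα i)]
      · intro b _ hb; simp [haval, Ne.symm hb]
      · simp
    have hrest : ∑ j, ∑ i, ‖v i j - a i j • ψ‖ ^ 2 ≤ 0 := by
      have : ∑ j, ∑ i, ‖v i j‖ ^ 2
          = ∑ j, ∑ i, (‖a i j‖ ^ 2 + ‖v i j - a i j • ψ‖ ^ 2) := by
        refine Finset.sum_congr rfl fun j _ => Finset.sum_congr rfl fun i _ => key i j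
      simp only [Finset.sum_add_distrib] at this
      linarith [hsumv, hsuma, this ▸ hsumv]
    have hzero : ∀ i j, v i j - a i j • ψ = 0 := by
      intro i j
      have hnn : ∀ j ∈ Finset.univ, (0:ℝ) ≤ ∑ i, ‖v i j - a i j • ψ‖ ^ 2 :=
        fun j _ => Finset.sum_nonneg fun i _ => sq_nonneg _
      have h1 : ∑ j, ∑ i, ‖v i j - a i j • ψ‖ ^ 2 = 0 :=
        le_antisymm hrest (Finset.sum_nonneg hnn)
      have h2 := (Finset.sum_eq_zero_iff_of_nonneg hnn).mp h1 j (Finset.mem_univ j)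
      have h3 := (Finset.sum_eq_zero_iff_of_nonneg
        (fun i _ => sq_nonneg ‖v i j - a i j • ψ‖)).mp h2 i (Finset.mem_univ i)
      have := pow_eq_zero_iff (n := 2) (by norm_num) |>.mp h3
      exact norm_eq_zero.mp this
    intro i j
    have := sub_eq_zero.mp (hzero i j)
    rw [← haval i j]
    exact this
  · intro hvec i j
    have hψψ : ⟪ψ, ψ⟫_ℂ = 1 := by
      rw [inner_self_eq_norm_sq_to_K, hψ]; norm_num
    rw [hvec i j, inner_smul_left, hψψ]
    split <;> simp
end

section
/- Let H be a complex Hilbert space and let V₀, …, V_{d-1} : H →L[ℂ] H satisfy (V i)* (V i) = 1 for every i and ∑_{i ∈ Fin d} (V i)(V i)* = 1 (a collection of d Cuntz isometries). Let ψ ∈ H be a unit vector such that ⟨(V i) X (V j)* ψ, ψ⟩ = (if i = j then (α i)^2 else 0) · ⟨X ψ, ψ⟩ for all i, j ∈ Fin d and all X in the unital *-subalgebra of B(H) generated by {V₀, …, V_{d-1}}. Then for all lists μ, ν over Fin d, ⟨V_μ (V_ν)* ψ, ψ⟩ = (if μ = ν then (α_μ)^2 else 0), where V_μ = V_{μ₁}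 ∘ ⋯ ∘ V_{μ_m} (with V_[] = 1) and α_μ = ∏ₖ α_{μₖ} (with α_[] = 1). In particular, the state x ↦ ⟨x ψ, ψ⟩ on the Cuntz algebra O_d generated by V₀, …, V_{d-1} is uniquely determined by α: it is the unique state s on O_d satisfying s(v_i x v_j*) = δ_{ij} (α i)^2 s(x). -/
open scoped InnerProductSpace
open ContinuousLinearMap

/-- If `V₀, …, V_{d-1}` are `d` Cuntz isometries on `H` and `ψ` is a unit vector satisfying
the quasi-free condition `⟨V_i X V_j* ψ, ψ⟩ = δ_{ij} (α i)² ⟨X ψ, ψ⟩` for all `X` in the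
unital *-subalgebra generated by the `V_i`, then for all words `μ, ν` over `Fin d`,
`⟨V_μ (V_ν)* ψ, ψ⟩ = δ_{μν} (α_μ)²`; in particular, the state `⟨· ψ, ψ⟩` on the Cuntz
algebra generated by `V₀, …, V_{d-1}` is uniquely determined by `α`. -/
theorem quasifree_state_on_Cuntz_unique
    {H : Type*} [NormedAddCommGroup H] [InnerProductSpace ℂ H] [CompleteSpace H]
    {d : ℕ} (hd : 2 ≤ d) (α : Fin d → ℝ) (hα : ∀ i, 0 < α i)
    (hsum : ∑ i, (α i) ^ 2 = 1)
    (V : Fin d → H →L[ℂ] H)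
    (hiso : ∀ i, (adjoint (V i)) ∘L (V i) = 1)
    (hfull : (∑ i, (V i) ∘L (adjoint (V i))) = 1)
    (ψ : H) (hψ : ‖ψ‖ = 1)
    (hqf : ∀ X : H →L[ℂ] H, X ∈ StarAlgebra.adjoin ℂ (Set.range V) →
      ∀ i j : Fin d,
        ⟪(V i) (X ((adjoint (V j)) ψ)), ψ⟫_ℂ
          = (if i = j then ((α i : ℂ)) ^ 2 else 0) * ⟪X ψ, ψ⟫_ℂ) :
    ∀ μ ν : List (Fin d),
      ⟪((μ.map V).prod * adjoint ((ν.map V).prod)) ψ, ψ⟫_ℂ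
        = if μ = ν then (((μ.map α).prod : ℝ) : ℂ) ^ 2 else 0 := by
  have hVmem : ∀ i, V i ∈ StarAlgebra.adjoin ℂ (Set.range V) := fun i =>
    StarAlgebra.subset_adjoin ℂ _ ⟨i, rfl⟩
  have hProdMem : ∀ μ : List (Fin d), ((μ.map V).prod) ∈ StarAlgebra.adjoin ℂ (Set.range V) := by
    intro μ
    induction μ with
    | nil => simpa using one_mem _
    | cons i μ ih => simpa using mul_mem (hVmem i) ih
  have hAdjMem : ∀ μ : List (Fin d),
      adjoint ((μ.map V).prod) ∈ StarAlgebra.adjoin ℂ (Set.range V) := by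
    intro μ
    rw [← ContinuousLinearMap.star_eq_adjoint]
    exact star_mem (hProdMem μ)
  have hψdec : ∀ x : H, x = ∑ j, (V j) ((adjoint (V j)) x) := by
    intro x
    conv_lhs => rw [show x = (1 : H →L[ℂ] H) x from rfl, ← hfull]
    simp
  -- the one-step cycling identity
  have hstep : ∀ X ∈ StarAlgebra.adjoin ℂ (Set.range V), ∀ i : Fin d,
      ⟪(V i) (X ψ), ψ⟫_ℂ = (α i : ℂ) ^ 2 * ⟪X ((V i) ψ), ψ⟫_ℂ := by
    intro X hX i
    have h1 : (V i) (X ψ) = ∑ j, (V i) ((X ∘L V j) ((adjoint (V j)) ψ)) := by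
      conv_lhs => rw [hψdec ψ]
      simp [map_sum]
    rw [h1, sum_inner]
    have h2 : ∀ j, ⟪(V i) ((X ∘L V j) ((adjoint (V j)) ψ)), ψ⟫_ℂ
        = (if i = j then (α i : ℂ) ^ 2 else 0) * ⟪(X ∘L V j) ψ, ψ⟫_ℂ := fun j =>
      hqf _ (mul_mem hX (hVmem j)) i j
    rw [Finset.sum_congr rfl fun j _ => h2 j]
    simp [ite_mul]
  set T : List (Fin d) → ℂ := fun σ => ⟪((σ.map V).prod) ψ, ψ⟫_ℂ with hT
  have hcycle : ∀ ρ σ : List (Fin d),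
      T (ρ ++ σ) = (((ρ.map α).prod : ℝ) : ℂ) ^ 2 * T (σ ++ ρ) := by
    intro ρ
    induction ρ with
    | nil => intro σ; simp
    | cons i ρ ih =>
      intro σ
      have e1 : T ((i :: ρ) ++ σ) = ⟪(V i) ((((ρ ++ σ).map V).prod) ψ), ψ⟫_ℂ := by
        simp [hT, ContinuousLinearMap.mul_apply]
      have e2 : (((ρ ++ σ).map V).prod) ((V i) ψ) = ((((ρ ++ σ) ++ [i]).map V).prod) ψ := by
        simp [List.map_append, List.prod_append, ContinuousLinearMap.mul_apply]
      rw [e1, hstep _ (hProdMem _) i]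
      have e3 : ⟪(((ρ ++ σ).map V).prod) ((V i) ψ), ψ⟫_ℂ = T ((ρ ++ σ) ++ [i]) := by
        rw [hT]; rw [e2]
      rw [e3, show (ρ ++ σ) ++ [i] = ρ ++ (σ ++ [i]) by simp, ih (σ ++ [i]),
        show (σ ++ [i]) ++ ρ = σ ++ (i :: ρ) by simp]
      simp only [List.map_cons, List.prod_cons]
      push_cast
      ring
  -- each α i < 1
  have hnt : Nontrivial (Fin d) := Fin.nontrivial_iff_two_le.mpr hd
  have hlt1 : ∀ i, α i < 1 := by
    intro i
    obtain ⟨j, hj⟩ := exists_ne i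
    have hsq : (α i) ^ 2 < 1 := by
      rw [← hsum]
      exact Finset.single_lt_sum hj (Finset.mem_univ i) (Finset.mem_univ j)
        (pow_pos (hα j) 2) (fun k _ _ => sq_nonneg (α k))
    nlinarith [hα i]
  have hprodlt : ∀ σ : List (Fin d), σ ≠ [] → (σ.map α).prod < 1 ∧ 0 < (σ.map α).prod := by
    intro σ
    induction σ with
    | nil => intro h; exact absurd rfl h
    | cons i σ ih =>
      intro _
      rcases eq_or_ne σ [] with rfl | hσ
      · simpa using ⟨hlt1 i, hα i⟩
      · obtain ⟨h1, h2⟩ := ih hσ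
        simp only [List.map_cons, List.prod_cons]
        constructor
        · nlinarith [hα i, hlt1 i]
        · exact mul_pos (hα i) h2
  have hTzero : ∀ σ : List (Fin d), σ ≠ [] → T σ = 0 := by
    intro σ hσ
    have h := hcycle σ []
    simp only [List.append_nil, List.nil_append] at h
    obtain ⟨h1, h2⟩ := hprodlt σ hσ
    have hne : ((((σ.map α).prod : ℝ) : ℂ) ^ 2) ≠ 1 := by
      rw [show ((((σ.map α).prod : ℝ) : ℂ) ^ 2) = ((((σ.map α).prod ^ 2 : ℝ)) : ℂ) by push_cast; ring]
      rw [ne_eq, show (1 : ℂ) = ((1 : ℝ) : ℂ) by norm_num, Complex.ofReal_inj]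
      nlinarith
    have : (1 - (((σ.map α).prod : ℝ) : ℂ) ^ 2) * T σ = 0 := by
      rw [sub_mul, one_mul]
      rw [← h]
      ring
    rcases mul_eq_zero.mp this with h' | h'
    · exact absurd (by linear_combination -h' : ((((σ.map α).prod : ℝ) : ℂ) ^ 2) = 1) hne
    · exact h'
  have hTzero' : ∀ σ : List (Fin d), σ ≠ [] →
      ⟪(adjoint ((σ.map V).prod)) ψ, ψ⟫_ℂ = 0 := by
    intro σ hσ
    rw [ContinuousLinearMap.adjoint_inner_left, ← inner_conj_symm]
    rw [show ⟪((σ.map V).prod) ψ, ψ⟫_ℂ = T σ from rfl, hTzero σ hσ]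
    simp
  intro μ
  induction μ with
  | nil =>
    intro ν
    cases ν with
    | nil =>
      have h1 : adjoint (1 : H →L[ℂ] H) = 1 := by
        rw [← ContinuousLinearMap.star_eq_adjoint, star_one]
      simp [h1, inner_self_eq_norm_sq_to_K, hψ]
    | cons j ν =>
      rw [if_neg (by simp)]
      simpa using hTzero' (j :: ν) (by simp)
  | cons i μ ih =>
    intro ν
    cases ν with
    | nil =>
      rw [if_neg (by simp)]
      have h1 : adjoint (1 : H →L[ℂ] H) = 1 := by
        rw [← ContinuousLinearMap.star_eq_adjoint, star_one]
      have := hTzero (i :: μ) (by simp)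
      simpa [hT, h1] using this
    | cons j ν =>
      have hadj : adjoint (((j :: ν).map V).prod)
          = adjoint ((ν.map V).prod) * adjoint (V j) := by
        simp only [List.map_cons, List.prod_cons]
        rw [← ContinuousLinearMap.star_eq_adjoint, ← ContinuousLinearMap.star_eq_adjoint,
          ← ContinuousLinearMap.star_eq_adjoint, star_mul]
      have key : (((i :: μ).map V).prod * adjoint (((j :: ν).map V).prod)) ψ
          = (V i) ((((μ.map V).prod * adjoint ((ν.map V).prod))) ((adjoint (V j)) ψ)) := by
        rw [hadj]
        simp [List.map_cons, List.prod_cons, ContinuousLinearMap.mul_apply]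
      rw [key, hqf _ (mul_mem (hProdMem μ) (hAdjMem ν)) i j, ih ν]
      by_cases hij : i = j
      · subst hij
        by_cases hμν : μ = ν
        · subst hμν
          simp only [if_pos rfl, List.map_cons, List.prod_cons]
          push_cast
          ring
        · simp [hμν]
      · simp [hij]
end

section
/- Let d ∈ ℕ with d ≥ 2 and let p be a polynomial with integer coefficients such that p(0) = −1, p(1) = d − 1, and every coefficient of p of degree ≥ 1 is nonnegative. Then p has exactly one real root in the open interval (0, 1); that is, there is exactly one λ ∈ ℝ with 0 < λ < 1 and p(λ) = 0. -/
/-- If `p ∈ ℤ[x]` satisfies `p(0) = -1`, `p(1) = d - 1` with `d ≥ 2`, and all coefficients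
of degree at least `1` are nonnegative, then `p` has exactly one real root in `(0, 1)`. -/
theorem unique_root_in_unit_interval
    (d : ℕ) (hd : 2 ≤ d) (p : Polynomial ℤ)
    (h0 : p.eval 0 = -1) (h1 : p.eval 1 = (d : ℤ) - 1)
    (hc : ∀ n : ℕ, 1 ≤ n → 0 ≤ p.coeff n) :
    ∃! x : ℝ, x ∈ Set.Ioo (0 : ℝ) 1 ∧ Polynomial.aeval x p = 0 := by
  set f : ℝ → ℝ := fun x => Polynomial.aeval x p with hf
  have key : ∀ x : ℝ, f x = ∑ n ∈ Finset.range (p.natDegree + 1), (p.coeff n : ℝ) * x ^ n := by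
    intro x
    rw [hf]
    simp only [Polynomial.aeval_def, Polynomial.eval₂_eq_sum_range]
    norm_num
  have hc0 : p.coeff 0 = -1 := by
    rw [Polynomial.coeff_zero_eq_eval_zero, h0]
  have hk : ∃ k, 1 ≤ k ∧ 0 < p.coeff k := by
    by_contra h
    push_neg at h
    have hz : ∀ k, 1 ≤ k → p.coeff k = 0 := fun k hk => le_antisymm (h k hk) (hc k hk)
    have heq : p.eval 1 = p.coeff 0 := by
      rw [Polynomial.eval_eq_sum_range, Finset.sum_eq_single 0]
      · simp
      · intro b _ hb
        rw [hz b (Nat.one_le_iff_ne_zero.mpr hb)]; ring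
      · intro habs
        exact absurd (Finset.mem_range.mpr (Nat.succ_pos _)) habs
    rw [h1, hc0] at heq
    omega
  have hmono : ∀ x y : ℝ, 0 ≤ x → x < y → f x < f y := by
    intro x y hx hxy
    rw [key, key]
    apply Finset.sum_lt_sum
    · intro n _
      rcases Nat.eq_zero_or_pos n with rfl | hn1
      · simp
      · exact mul_le_mul_of_nonneg_left (pow_le_pow_left₀ hx hxy.le n)
          (by exact_mod_cast hc n hn1)
    · obtain ⟨k, hk1, hkpos⟩ := hk
      refine ⟨k, Finset.mem_range.mpr (Nat.lt_succ_of_le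
        (Polynomial.le_natDegree_of_ne_zero hkpos.ne')), ?_⟩
      have hpow : x ^ k < y ^ k := pow_lt_pow_left₀ hxy hx (by omega)
      exact mul_lt_mul_of_pos_left hpow (by exact_mod_cast hkpos)
  have hcont : Continuous f := by
    rw [hf]; exact p.continuous_aeval
  have hf0 : f 0 = -1 := by
    have := key 0
    rw [this, Finset.sum_eq_single 0]
    · simp [hc0]
    · intro b _ hb; simp [zero_pow hb]
    · intro habs; exact absurd (Finset.mem_range.mpr (Nat.succ_pos _)) habs
  have hf1 : f 1 = (d : ℝ) - 1 := by
    rw [hf]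
    simp only [Polynomial.aeval_def, Polynomial.eval₂_at_one, h1]
    push_cast
    ring
  have hsub : Set.Ioo (f 0) (f 1) ⊆ f '' Set.Ioo (0 : ℝ) 1 :=
    intermediate_value_Ioo (by norm_num) hcont.continuousOn
  have h0mem : (0 : ℝ) ∈ Set.Ioo (f 0) (f 1) := by
    rw [hf0, hf1]
    constructor
    · norm_num
    · have : (2 : ℝ) ≤ d := by exact_mod_cast hd
      linarith
  obtain ⟨x, hxmem, hxval⟩ := hsub h0mem
  refine ⟨x, ⟨hxmem, hxval⟩, ?_⟩
  rintro y ⟨hymem, hyval⟩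
  by_contra hne
  rcases lt_or_gt_of_ne hne with h | h
  · have := hmono y x hymem.1.le h
    rw [hxval] at this; exact this.ne hyval
  · have := hmono x y hxmem.1.le h
    rw [hxval] at this; exact this.ne' hyval
end
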